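/- For θ, ζ > 0 and n ≥ 2, let E_n(θ,ζ) = (Σ_{π ∈ S_n} ℓ(π) · θ^{ℓ(π)} ζ^{u(π)}) / ∏_{j=0}^{n−2}(θ+ζ+j) be the expected number of proper lower records of a permutation distributed according to P_n^{(θ,ζ)}. Then E_n(θ,ζ) = Σ_{j=2}^{n} θ/(θ+ζ+j−2), and consequently E_n(θ,ζ)/log n → θ as n → ∞. -/

import Mathlib

open Finset Filter

/-- `π j` is a lower record: it is the minimum among the first `j+1` entries. -/
def isLowerRecord {n : ℕ} (π : Equiv.Perm (Fin n)) (j : Fin n) : Prop :=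
  ∀ k, k ≤ j → π j ≤ π k

/-- `π j` is an upper record: it is the maximum among the first `j+1` entries. -/
def isUpperRecord {n : ℕ} (π : Equiv.Perm (Fin n)) (j : Fin n) : Prop :=
  ∀ k, k ≤ j → π k ≤ π j

instance {n : ℕ} (π : Equiv.Perm (Fin n)) (j : Fin n) : Decidable (isLowerRecord π j) :=
  inferInstanceAs (Decidable (∀ k, k ≤ j → π j ≤ π k))

instance {n : ℕ} (π : Equiv.Perm (Fin n)) (j : Fin n) : Decidable (isUpperRecord π j) :=
  inferInstanceAs (Decidable (∀ k, k ≤ j → π k ≤ π j))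

/-- number of proper (position ≥ 2, i.e. index ≥ 1) lower records -/
def properLowerCount {n : ℕ} (π : Equiv.Perm (Fin n)) : ℕ :=
  (univ.filter fun j : Fin n => 0 < j.val ∧ isLowerRecord π j).card

/-- number of proper (position ≥ 2, i.e. index ≥ 1) upper records -/
def properUpperCount {n : ℕ} (π : Equiv.Perm (Fin n)) : ℕ :=
  (univ.filter fun j : Fin n => 0 < j.val ∧ isUpperRecord π j).card

/-- `A n ℓ u` = number of permutations of `{1,…,n}` with exactly `ℓ` proper lower
records and exactly `u` proper upper records. -/
def A (n ℓ u : ℕ) : ℕ :=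
  (univ.filter fun π : Equiv.Perm (Fin n) =>
    properLowerCount π = ℓ ∧ properUpperCount π = u).card

/-- the permutation of `Fin (n+1)` whose last entry is `v` and whose earlier entries
are `σ` relabelled via `succAbove v`. -/
noncomputable def lastDecomp {n : ℕ} (v : Fin (n + 1)) (σ : Equiv.Perm (Fin n)) :
    Equiv.Perm (Fin (n + 1)) :=
  Equiv.ofBijective (Fin.lastCases v (fun i => v.succAbove (σ i)))
    ((Fintype.bijective_iff_injective_and_card _).2 ⟨by
      intro a b hab
      induction a using Fin.lastCases with
      | last =>
        induction b using Fin.lastCases with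
        | last => rfl
        | cast b =>
          simp only [Fin.lastCases_last, Fin.lastCases_castSucc] at hab
          exact absurd hab.symm (Fin.succAbove_ne v _)
      | cast a =>
        induction b using Fin.lastCases with
        | last =>
          simp only [Fin.lastCases_last, Fin.lastCases_castSucc] at hab
          exact absurd hab (Fin.succAbove_ne v _)
        | cast b =>
          simp only [Fin.lastCases_castSucc] at hab
          have := σ.injective (v.succAbove_right_injective hab)
          rw [this], rfl⟩)

@[simp] lemma lastDecomp_last {n : ℕ} (v : Fin (n + 1)) (σ : Equiv.Perm (Fin n)) :
    lastDecomp v σ (Fin.last n) = v := by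
  simp [lastDecomp, Equiv.ofBijective_apply]

@[simp] lemma lastDecomp_castSucc {n : ℕ} (v : Fin (n + 1)) (σ : Equiv.Perm (Fin n)) (i : Fin n) :
    lastDecomp v σ i.castSucc = v.succAbove (σ i) := by
  simp [lastDecomp, Equiv.ofBijective_apply]

lemma lastDecomp_bijective {n : ℕ} :
    Function.Bijective (fun p : Fin (n + 1) × Equiv.Perm (Fin n) => lastDecomp p.1 p.2) := by
  rw [Fintype.bijective_iff_injective_and_card]
  constructor
  · rintro ⟨v, σ⟩ ⟨w, τ⟩ h
    simp only at h
    have hv : v = w := by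
      have := congrArg (fun f : Equiv.Perm (Fin (n+1)) => f (Fin.last n)) h
      simpa using this
    subst hv
    have hσ : σ = τ := by
      ext i
      have := congrArg (fun f : Equiv.Perm (Fin (n+1)) => f i.castSucc) h
      simp only [lastDecomp_castSucc] at this
      exact congrArg Fin.val (v.succAbove_right_injective this)
    rw [hσ]
  · simp [Fintype.card_perm, Nat.factorial_succ]

lemma isLowerRecord_lastDecomp_castSucc {n : ℕ} (v : Fin (n + 1)) (σ : Equiv.Perm (Fin n))
    (i : Fin n) : isLowerRecord (lastDecomp v σ) i.castSucc ↔ isLowerRecord σ i := by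
  constructor
  · intro h k hk
    have := h k.castSucc (Fin.castSucc_le_castSucc_iff.2 hk)
    simpa only [lastDecomp_castSucc, Fin.succAbove_le_succAbove_iff] using this
  · intro h k hk
    have hkl : k ≠ Fin.last n := Fin.ne_last_of_lt (lt_of_le_of_lt hk (Fin.castSucc_lt_last i))
    obtain ⟨k', rfl⟩ := Fin.exists_castSucc_eq.2 hkl
    simp only [lastDecomp_castSucc, Fin.succAbove_le_succAbove_iff]
    exact h k' (Fin.castSucc_le_castSucc_iff.1 hk)

lemma isUpperRecord_lastDecomp_castSucc {n : ℕ} (v : Fin (n + 1)) (σ : Equiv.Perm (Fin n))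
    (i : Fin n) : isUpperRecord (lastDecomp v σ) i.castSucc ↔ isUpperRecord σ i := by
  constructor
  · intro h k hk
    have := h k.castSucc (Fin.castSucc_le_castSucc_iff.2 hk)
    simpa only [lastDecomp_castSucc, Fin.succAbove_le_succAbove_iff] using this
  · intro h k hk
    have hkl : k ≠ Fin.last n := Fin.ne_last_of_lt (lt_of_le_of_lt hk (Fin.castSucc_lt_last i))
    obtain ⟨k', rfl⟩ := Fin.exists_castSucc_eq.2 hkl
    simp only [lastDecomp_castSucc, Fin.succAbove_le_succAbove_iff]
    exact h k' (Fin.castSucc_le_castSucc_iff.1 hk)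

lemma isLowerRecord_lastDecomp_last {n : ℕ} (v : Fin (n + 1)) (σ : Equiv.Perm (Fin n)) :
    isLowerRecord (lastDecomp v σ) (Fin.last n) ↔ v = 0 := by
  constructor
  · intro h
    have := h ((lastDecomp v σ).symm 0) (Fin.le_last _)
    simp only [lastDecomp_last, Equiv.apply_symm_apply] at this
    exact Fin.le_zero_iff.1 this
  · rintro rfl k _
    simp [Fin.zero_le]

lemma isUpperRecord_lastDecomp_last {n : ℕ} (v : Fin (n + 1)) (σ : Equiv.Perm (Fin n)) :
    isUpperRecord (lastDecomp v σ) (Fin.last n) ↔ v = Fin.last n := by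
  constructor
  · intro h
    have := h ((lastDecomp v σ).symm (Fin.last n)) (Fin.le_last _)
    simp only [lastDecomp_last, Equiv.apply_symm_apply] at this
    exact le_antisymm (Fin.le_last v) this
  · rintro rfl k _
    simp [Fin.le_last]

lemma properLowerCount_lastDecomp {n : ℕ} (v : Fin (n + 2)) (σ : Equiv.Perm (Fin (n + 1))) :
    properLowerCount (lastDecomp v σ) = properLowerCount σ + (if v = 0 then 1 else 0) := by
  unfold properLowerCount
  rw [Finset.card_filter, Finset.card_filter, Fin.sum_univ_castSucc]
  congr 1
  · apply Finset.sum_congr rfl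
    intro i _
    simp [isLowerRecord_lastDecomp_castSucc]
  · simp only [isLowerRecord_lastDecomp_last]
    have : (0:ℕ) < (Fin.last (n+1)).val := Nat.succ_pos n
    simp [this]

lemma properUpperCount_lastDecomp {n : ℕ} (v : Fin (n + 2)) (σ : Equiv.Perm (Fin (n + 1))) :
    properUpperCount (lastDecomp v σ) = properUpperCount σ + (if v = Fin.last (n+1) then 1 else 0) := by
  unfold properUpperCount
  rw [Finset.card_filter, Finset.card_filter, Fin.sum_univ_castSucc]
  congr 1
  · apply Finset.sum_congr rfl
    intro i _
    simp [isUpperRecord_lastDecomp_castSucc]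
  · simp only [isUpperRecord_lastDecomp_last]
    have : (0:ℕ) < (Fin.last (n+1)).val := Nat.succ_pos n
    simp [this]

noncomputable def Sw (θ ζ : ℝ) (n : ℕ) : ℝ :=
  ∑ π : Equiv.Perm (Fin n), θ ^ properLowerCount π * ζ ^ properUpperCount π

noncomputable def Tw (θ ζ : ℝ) (n : ℕ) : ℝ :=
  ∑ π : Equiv.Perm (Fin n),
    (properLowerCount π : ℝ) * θ ^ properLowerCount π * ζ ^ properUpperCount π

lemma properLowerCount_one (π : Equiv.Perm (Fin 1)) : properLowerCount π = 0 := by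
  unfold properLowerCount
  rw [Finset.card_eq_zero]
  ext j
  simp [Fin.val_eq_zero j]

lemma properUpperCount_one (π : Equiv.Perm (Fin 1)) : properUpperCount π = 0 := by
  unfold properUpperCount
  rw [Finset.card_eq_zero]
  ext j
  simp [Fin.val_eq_zero j]

lemma Sw_one (θ ζ : ℝ) : Sw θ ζ 1 = 1 := by
  simp [Sw, properLowerCount_one, properUpperCount_one, Fintype.card_perm]

lemma Tw_one (θ ζ : ℝ) : Tw θ ζ 1 = 0 := by
  simp [Tw, properLowerCount_one]

lemma sum_perm_succ {n : ℕ} (f : Equiv.Perm (Fin (n + 1)) → ℝ) :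
    ∑ π : Equiv.Perm (Fin (n + 1)), f π =
      ∑ v : Fin (n + 1), ∑ σ : Equiv.Perm (Fin n), f (lastDecomp v σ) :=
  calc ∑ π : Equiv.Perm (Fin (n + 1)), f π
      = ∑ p : Fin (n + 1) × Equiv.Perm (Fin n), f (lastDecomp p.1 p.2) :=
        (Fintype.sum_bijective _ lastDecomp_bijective _ f fun p => rfl).symm
    _ = ∑ v : Fin (n + 1), ∑ σ : Equiv.Perm (Fin n), f (lastDecomp v σ) :=
        Fintype.sum_prod_type _

lemma sum_v_aux {n : ℕ} (θ ζ : ℝ) :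
    ∑ v : Fin (n + 2), (if v = 0 then θ else 1) * (if v = Fin.last (n+1) then ζ else 1)
      = θ + ζ + n := by
  have h0 : (0 : Fin (n+2)) ≠ Fin.last (n+1) := by
    intro h
    have := congrArg Fin.val h
    simp at this
  have : ∀ v : Fin (n + 2),
      (if v = 0 then θ else 1) * (if v = Fin.last (n+1) then ζ else 1)
        = (if v = 0 then θ - 1 else 0) + (if v = Fin.last (n+1) then ζ - 1 else 0) + 1 := by
    intro v
    by_cases hv0 : v = 0
    · subst hv0; simp [h0]; try ring
    · by_cases hvl : v = Fin.last (n+1)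
      · subst hvl; simp [Ne.symm h0, hv0]; try ring
      · simp [hv0, hvl]
  rw [Finset.sum_congr rfl (fun v _ => this v)]
  rw [Finset.sum_add_distrib, Finset.sum_add_distrib]
  simp [Finset.sum_ite_eq']
  push_cast
  ring

lemma Sw_succ {n : ℕ} (θ ζ : ℝ) : Sw θ ζ (n + 2) = (θ + ζ + n) * Sw θ ζ (n + 1) := by
  unfold Sw
  rw [sum_perm_succ]
  have : ∀ v : Fin (n+2), ∀ σ : Equiv.Perm (Fin (n+1)),
      θ ^ properLowerCount (lastDecomp v σ) * ζ ^ properUpperCount (lastDecomp v σ)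
      = ((if v = 0 then θ else 1) * (if v = Fin.last (n+1) then ζ else 1)) *
        (θ ^ properLowerCount σ * ζ ^ properUpperCount σ) := by
    intro v σ
    rw [properLowerCount_lastDecomp, properUpperCount_lastDecomp, pow_add, pow_add]
    by_cases hv0 : v = 0 <;> by_cases hvl : v = Fin.last (n+1) <;> simp [hv0, hvl] <;> try ring
  calc ∑ v : Fin (n+2), ∑ σ : Equiv.Perm (Fin (n+1)),
        θ ^ properLowerCount (lastDecomp v σ) * ζ ^ properUpperCount (lastDecomp v σ)
      = ∑ v : Fin (n+2), ((if v = 0 then θ else 1) * (if v = Fin.last (n+1) then ζ else 1)) *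
          ∑ σ : Equiv.Perm (Fin (n+1)), θ ^ properLowerCount σ * ζ ^ properUpperCount σ := by
        apply Finset.sum_congr rfl
        intro v _
        rw [Finset.mul_sum]
        exact Finset.sum_congr rfl fun σ _ => this v σ
    _ = (θ + ζ + n) * Sw θ ζ (n+1) := by
        rw [← Finset.sum_mul, sum_v_aux]
        rfl

lemma Tw_succ {n : ℕ} (θ ζ : ℝ) :
    Tw θ ζ (n + 2) = (θ + ζ + n) * Tw θ ζ (n + 1) + θ * Sw θ ζ (n + 1) := by
  have h0 : (0 : Fin (n+2)) ≠ Fin.last (n+1) := by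
    intro h; have := congrArg Fin.val h; simp at this
  have key : ∀ v : Fin (n+2), ∀ σ : Equiv.Perm (Fin (n+1)),
      (properLowerCount (lastDecomp v σ) : ℝ) * θ ^ properLowerCount (lastDecomp v σ)
        * ζ ^ properUpperCount (lastDecomp v σ)
      = ((if v = 0 then θ else 1) * (if v = Fin.last (n+1) then ζ else 1)) *
          ((properLowerCount σ : ℝ) * θ ^ properLowerCount σ * ζ ^ properUpperCount σ)
        + (if v = 0 then θ * (θ ^ properLowerCount σ * ζ ^ properUpperCount σ)
              * (if v = Fin.last (n+1) then ζ else 1) else 0) := by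
    intro v σ
    rw [properLowerCount_lastDecomp, properUpperCount_lastDecomp, pow_add, pow_add]
    by_cases hv0 : v = 0 <;> by_cases hvl : v = Fin.last (n+1) <;>
      simp [hv0, hvl] <;> push_cast <;> try ring
  calc Tw θ ζ (n + 2)
      = ∑ v : Fin (n+2), ∑ σ : Equiv.Perm (Fin (n+1)),
          ((properLowerCount (lastDecomp v σ) : ℝ) * θ ^ properLowerCount (lastDecomp v σ)
            * ζ ^ properUpperCount (lastDecomp v σ)) := sum_perm_succ _
    _ = ∑ v : Fin (n+2),
          (((if v = 0 then θ else 1) * (if v = Fin.last (n+1) then ζ else 1)) * Tw θ ζ (n+1)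
            + (if v = 0 then θ * Sw θ ζ (n+1) * (if v = Fin.last (n+1) then ζ else 1) else 0)) := by
        apply Finset.sum_congr rfl
        intro v _
        rw [Finset.sum_congr rfl (fun σ _ => key v σ), Finset.sum_add_distrib, ← Finset.mul_sum]
        congr 1
        by_cases hv0 : v = 0
        · simp only [hv0, if_true]
          rw [← Finset.sum_mul, ← Finset.mul_sum]
          rfl
        · simp [hv0]
    _ = (θ + ζ + n) * Tw θ ζ (n + 1) + θ * Sw θ ζ (n + 1) := by
        rw [Finset.sum_add_distrib, ← Finset.sum_mul, sum_v_aux]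
        congr 1
        rw [Finset.sum_ite_eq' univ (0 : Fin (n+2))]
        simp [h0]

lemma Sw_closed (θ ζ : ℝ) (m : ℕ) : Sw θ ζ (m + 1) = ∏ j ∈ range m, (θ + ζ + j) := by
  induction m with
  | zero => simpa using Sw_one θ ζ
  | succ m ih =>
    rw [Sw_succ, ih, Finset.prod_range_succ]
    ring

lemma Tw_closed {θ ζ : ℝ} (hc : 0 < θ + ζ) (m : ℕ) :
    Tw θ ζ (m + 1) =
      (∏ j ∈ range m, (θ + ζ + j)) * ∑ j ∈ Finset.Icc 2 (m + 1), θ / (θ + ζ + (j : ℝ) - 2) := by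
  induction m with
  | zero => simpa using Tw_one θ ζ
  | succ m ih =>
    have hm : (0:ℝ) < θ + ζ + m := by positivity
    rw [Tw_succ, ih, Sw_closed, Finset.prod_range_succ,
      Finset.sum_Icc_succ_top (by omega : 2 ≤ m + 1 + 1)]
    have : θ + ζ + ((m + 1 + 1 : ℕ) : ℝ) - 2 = θ + ζ + m := by push_cast; ring
    rw [this]
    field_simp


lemma log_succ_sub_le {x : ℝ} (hx : 0 < x) : Real.log (x + 1) - Real.log x ≤ 1 / x := by
  rw [← Real.log_div (by positivity) hx.ne']
  have h := Real.log_le_sub_one_of_pos (x := (x+1)/x) (by positivity)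
  calc Real.log ((x+1)/x) ≤ (x+1)/x - 1 := h
    _ = 1/x := by field_simp; ring

lemma le_log_succ_sub {x : ℝ} (hx : 0 < x) : 1 / (x + 1) ≤ Real.log (x + 1) - Real.log x := by
  have h := Real.log_le_sub_one_of_pos (x := x/(x+1)) (by positivity)
  rw [Real.log_div hx.ne' (by positivity)] at h
  have : x / (x + 1) - 1 = -(1/(x+1)) := by field_simp; ring
  rw [this] at h
  linarith

lemma log_tele {c : ℝ} (m : ℕ) :
    ∑ k ∈ range m, (Real.log (c + ((k+1:ℕ):ℝ)) - Real.log (c + k))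
      = Real.log (c + m) - Real.log c := by
  rw [Finset.sum_range_sub (fun k : ℕ => Real.log (c + k))]
  norm_num

lemma sum_inv_lb {c : ℝ} (hc : 0 < c) (m : ℕ) :
    Real.log (c + m) - Real.log c ≤ ∑ k ∈ range m, 1 / (c + k) := by
  rw [← log_tele (c := c) m]
  apply Finset.sum_le_sum
  intro k _
  have hk : (0:ℝ) < c + k := by positivity
  have := log_succ_sub_le hk
  have hcast : c + ((k+1:ℕ):ℝ) = (c + k) + 1 := by push_cast; ring
  rw [hcast]
  exact this

lemma sum_inv_ub {c : ℝ} (hc : 0 < c) (m : ℕ) :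
    ∑ k ∈ range (m + 1), 1 / (c + k) ≤ 1 / c + (Real.log (c + m) - Real.log c) := by
  rw [Finset.sum_range_succ']
  have h1 : ∑ k ∈ range m, 1 / (c + ((k+1:ℕ):ℝ)) ≤ Real.log (c + m) - Real.log c := by
    rw [← log_tele (c := c) m]
    apply Finset.sum_le_sum
    intro k _
    have hk : (0:ℝ) < c + k := by positivity
    have := le_log_succ_sub hk
    have hcast : c + ((k+1:ℕ):ℝ) = (c + k) + 1 := by push_cast; ring
    rw [hcast]
    exact this
  have h0 : 1 / (c + ((0:ℕ):ℝ)) = 1 / c := by norm_num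
  rw [h0]
  linarith

lemma tendsto_ratio {c : ℝ} (hc : 0 < c) :
    Tendsto (fun n : ℕ => (c + ((n - 1 : ℕ):ℝ)) / n) atTop (nhds 1) := by
  have h : ∀ᶠ n : ℕ in atTop, 1 + (c - 1) / n = (c + ((n - 1 : ℕ):ℝ)) / n := by
    filter_upwards [eventually_ge_atTop 1] with n hn
    have hn0 : (0:ℝ) < n := by exact_mod_cast hn
    have : ((n - 1 : ℕ):ℝ) = (n:ℝ) - 1 := by
      have : (1:ℕ) ≤ n := hn
      push_cast [this]
      ring
    rw [this]
    field_simp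
    ring
  have : Tendsto (fun n : ℕ => 1 + (c - 1) / n) atTop (nhds (1 + 0)) :=
    tendsto_const_nhds.add (tendsto_const_div_atTop_nhds_zero_nat _)
  rw [add_zero] at this
  exact this.congr' h

lemma tendsto_log_shift {c : ℝ} (hc : 0 < c) :
    Tendsto (fun n : ℕ => Real.log ((c + ((n - 1 : ℕ):ℝ)) / n)) atTop (nhds 0) := by
  have := (Real.continuousAt_log one_ne_zero).tendsto.comp (tendsto_ratio hc)
  rwa [Real.log_one] at this

lemma tendsto_logn : Tendsto (fun n : ℕ => Real.log n) atTop atTop :=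
  Real.tendsto_log_atTop.comp tendsto_natCast_atTop_atTop

lemma tendsto_bound {c : ℝ} (hc : 0 < c) (d : ℝ) :
    Tendsto (fun n : ℕ => (d + (Real.log (c + ((n - 1 : ℕ):ℝ)) - Real.log c)) / Real.log n)
      atTop (nhds 1) := by
  have key : ∀ᶠ n : ℕ in atTop,
      (d + (Real.log (c + ((n - 1 : ℕ):ℝ)) - Real.log c)) / Real.log n
        = 1 + (d + Real.log ((c + ((n - 1 : ℕ):ℝ)) / n) - Real.log c) / Real.log n := by
    filter_upwards [eventually_ge_atTop 2] with n hn
    have hn0 : (0:ℝ) < n := by positivity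
    have h2n : (2:ℝ) ≤ n := by exact_mod_cast hn
    have hlogn : Real.log n ≠ 0 := (Real.log_pos (by linarith)).ne'
    have hpos : (0:ℝ) < c + ((n - 1 : ℕ):ℝ) := by positivity
    rw [Real.log_div hpos.ne' hn0.ne']
    field_simp
    ring
  have h2 : Tendsto (fun n : ℕ =>
      (d + Real.log ((c + ((n - 1 : ℕ):ℝ)) / n) - Real.log c) / Real.log n) atTop (nhds 0) := by
    apply Tendsto.div_atTop (l := atTop) (a := d + 0 - Real.log c)
    · exact (tendsto_const_nhds.add (tendsto_log_shift hc)).sub tendsto_const_nhds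
    · exact tendsto_logn
  have h3 : Tendsto (fun n : ℕ => 1 + (d + Real.log ((c + ((n - 1 : ℕ):ℝ)) / n) - Real.log c)
      / Real.log n) atTop (nhds (1 + 0)) := tendsto_const_nhds.add h2
  rw [add_zero] at h3
  exact h3.congr' (key.mono fun n h => h.symm)


lemma tendsto_sum_div_log {c : ℝ} (hc : 0 < c) :
    Tendsto (fun n : ℕ => (∑ k ∈ range (n - 1), 1 / (c + k)) / Real.log n) atTop (nhds 1) := by
  apply tendsto_of_tendsto_of_tendsto_of_le_of_le' (tendsto_bound hc 0) (tendsto_bound hc (1/c))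
  · filter_upwards [eventually_ge_atTop 2] with n hn
    have h2n : (2:ℝ) ≤ n := by exact_mod_cast hn
    have hlog : 0 < Real.log n := Real.log_pos (by linarith)
    rw [zero_add]
    gcongr
    exact sum_inv_lb hc (n - 1)
  · filter_upwards [eventually_ge_atTop 2] with n hn
    have h2n : (2:ℝ) ≤ n := by exact_mod_cast hn
    have hlog : 0 < Real.log n := Real.log_pos (by linarith)
    gcongr
    have hrw : n - 1 = (n - 2) + 1 := by omega
    rw [hrw]
    refine (sum_inv_ub hc (n - 2)).trans ?_
    have hle : ((n - 2 : ℕ):ℝ) ≤ ((n - 2 + 1 : ℕ):ℝ) := by exact_mod_cast (by omega : n - 2 ≤ n - 2 + 1)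
    have := (Real.log_le_log_iff (by positivity : (0:ℝ) < c + ((n-2:ℕ):ℝ))
      (by positivity : (0:ℝ) < c + ((n-2+1:ℕ):ℝ))).2 (by linarith)
    linarith

lemma sum_Icc_reindex {c : ℝ} (θ : ℝ) {n : ℕ} (hn : 1 ≤ n) :
    ∑ j ∈ Finset.Icc 2 n, θ / (c + (j : ℝ) - 2) = θ * ∑ k ∈ range (n - 1), 1 / (c + k) := by
  rw [← Finset.Ico_add_one_right_eq_Icc, Finset.sum_Ico_eq_sum_range]
  have hr : n + 1 - 2 = n - 1 := by omega
  rw [hr, Finset.mul_sum]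
  apply Finset.sum_congr rfl
  intro k _
  have : c + ((2 + k : ℕ):ℝ) - 2 = c + k := by push_cast; ring
  rw [this, mul_one_div]

/-- `E_n(θ,ζ) = (Σ_{π ∈ S_n} ℓ(π) θ^{ℓ(π)} ζ^{u(π)}) / (θ+ζ)_{n−1}`, the expected number
of proper lower records under `P_n^{(θ,ζ)}`. -/
noncomputable def expLower (θ ζ : ℝ) (n : ℕ) : ℝ :=
  (∑ π : Equiv.Perm (Fin n),
      (properLowerCount π : ℝ) * θ ^ properLowerCount π * ζ ^ properUpperCount π)
    / ∏ j ∈ Finset.range (n - 1), (θ + ζ + (j : ℝ))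

lemma expLower_eq {θ ζ : ℝ} (hc : 0 < θ + ζ) {n : ℕ} (hn : 1 ≤ n) :
    expLower θ ζ n = ∑ j ∈ Finset.Icc 2 n, θ / (θ + ζ + (j : ℝ) - 2) := by
  obtain ⟨m, rfl⟩ : ∃ m, n = m + 1 := ⟨n - 1, by omega⟩
  have hD : (∏ j ∈ range m, (θ + ζ + (j:ℝ))) ≠ 0 := by
    apply Finset.prod_ne_zero_iff.2
    intro j _
    positivity
  have : expLower θ ζ (m+1) = Tw θ ζ (m+1) / ∏ j ∈ range m, (θ + ζ + (j:ℝ)) := rfl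
  rw [this, Tw_closed hc, mul_comm, mul_div_assoc, div_self hD, mul_one]

/-- `E_n(θ,ζ) = Σ_{j=2}^{n} θ/(θ+ζ+j−2)` and `E_n(θ,ζ)/log n → θ`. -/
theorem stmt_8 (θ ζ : ℝ) (hθ : 0 < θ) (hζ : 0 < ζ) :
    (∀ n : ℕ, 2 ≤ n →
        expLower θ ζ n = ∑ j ∈ Finset.Icc 2 n, θ / (θ + ζ + (j : ℝ) - 2)) ∧
    Filter.Tendsto (fun n : ℕ => expLower θ ζ n / Real.log n) Filter.atTop (nhds θ) := by
  have hc : 0 < θ + ζ := by linarith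
  constructor
  · intro n hn
    exact expLower_eq hc (by omega)
  · have h1 := (tendsto_sum_div_log hc).const_mul θ
    rw [mul_one] at h1
    apply h1.congr'
    filter_upwards [Filter.eventually_ge_atTop 1] with n hn
    rw [expLower_eq hc hn, sum_Icc_reindex θ hn, mul_div_assoc]
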